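/- Under the same differentiation-under-the-integral conditions, the Hyvärinen score of the predictive density decomposes as H(y_t, p(·|y_{1:t-1})) = E_t[ H(y_t, p(·|θ)) ] + Var_t[ (d/dy_t) log p(y_t|θ) ], where E_t and Var_t are posterior expectation and variance over θ ~ p(dθ|y_{1:t}). -/

import Mathlib

open MeasureTheory

/-- If `g` is positive everywhere and `|g''| ≤ b`, then `(g')² ≤ 2 b g`. -/
lemma sq_deriv_le_two_mul (g g1 g2 : ℝ → ℝ) (b : ℝ)
    (hpos : ∀ x, 0 < g x)
    (hg : ∀ x, HasDerivAt g (g1 x) x)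
    (hg1 : ∀ x, HasDerivAt g1 (g2 x) x)
    (hb : ∀ x, |g2 x| ≤ b) (y : ℝ) :
    (g1 y) ^ 2 ≤ 2 * b * g y := by
  set φ : ℝ → ℝ := fun x => g x - g y - g1 y * (x - y) - b / 2 * (x - y) ^ 2 with hφdef
  set ψ : ℝ → ℝ := fun x => g1 x - g1 y - b * (x - y) with hψdef
  have hdφ : ∀ x, HasDerivAt φ (ψ x) x := by
    intro x
    have h1 : HasDerivAt (fun x : ℝ => x - y) 1 x := (hasDerivAt_id x).sub_const y
    have h2 : HasDerivAt (fun x : ℝ => (x - y) ^ 2) (2 * (x - y) ^ 1 * 1) x := h1.pow 2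
    have := (((hg x).sub_const (g y)).sub (h1.const_mul (g1 y))).sub (h2.const_mul (b / 2))
    exact this.congr_deriv (by rw [hψdef]; ring)
  have hdψ : ∀ x, HasDerivAt ψ (g2 x - b) x := by
    intro x
    have h1 : HasDerivAt (fun x : ℝ => x - y) 1 x := (hasDerivAt_id x).sub_const y
    have := ((hg1 x).sub_const (g1 y)).sub (h1.const_mul b)
    exact this.congr_deriv (by ring)
  have hψanti : Antitone ψ := by
    apply antitone_of_deriv_nonpos (fun x => (hdψ x).differentiableAt)
    intro x
    rw [(hdψ x).deriv]
    have := (abs_le.1 (hb x)).2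
    linarith
  have hψy : ψ y = 0 := by simp [hψdef]
  have hφderiv : ∀ x, deriv φ x = ψ x := fun x => (hdφ x).deriv
  have hφdiff : Differentiable ℝ φ := fun x => (hdφ x).differentiableAt
  have hφy : φ y = 0 := by simp [hφdef]
  have hkey : ∀ x, φ x ≤ 0 := by
    intro x
    rcases le_total y x with hx | hx
    · have hA : AntitoneOn φ (Set.Ici y) := by
        apply antitoneOn_of_deriv_nonpos (convex_Ici y) hφdiff.continuous.continuousOn
          hφdiff.differentiableOn
        intro z hz
        rw [hφderiv z]
        rw [interior_Ici] at hz
        calc ψ z ≤ ψ y := hψanti (le_of_lt hz)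
        _ = 0 := hψy
      have := hA (Set.self_mem_Ici) hx hx
      rwa [hφy] at this
    · have hM : MonotoneOn φ (Set.Iic y) := by
        apply monotoneOn_of_deriv_nonneg (convex_Iic y) hφdiff.continuous.continuousOn
          hφdiff.differentiableOn
        intro z hz
        rw [hφderiv z]
        rw [interior_Iic] at hz
        have : ψ y ≤ ψ z := hψanti (le_of_lt hz)
        rw [hψy] at this
        exact this
      have := hM hx (Set.self_mem_Iic) hx
      rwa [hφy] at this
  have hquad : ∀ t : ℝ, 0 ≤ b / 2 * (t * t) + g1 y * t + g y := by
    intro t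
    have h1 := hkey (y + t)
    have h2 := hpos (y + t)
    simp only [hφdef, add_sub_cancel_left] at h1
    nlinarith [h1, h2]
  have := discrim_le_zero hquad
  rw [discrim] at this
  nlinarith [this, hpos y]

/-- Hyvärinen score `H(y,p) = 2 (log p)''(y) + ((log p)'(y))²`. -/
noncomputable def hyvScore (p : ℝ → ℝ) (y : ℝ) : ℝ :=
  2 * deriv (deriv (fun w => Real.log (p w))) y + (deriv (fun w => Real.log (p w)) y) ^ 2

lemma derivLog_eq (g g1 : ℝ → ℝ)
    (hpos : ∀ x, 0 < g x)
    (hg : ∀ x, HasDerivAt g (g1 x) x) :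
    deriv (fun w => Real.log (g w)) = fun x => g1 x / g x := by
  funext x
  exact ((hg x).log (hpos x).ne').deriv

lemma hyv_formula (g g1 g2 : ℝ → ℝ)
    (hpos : ∀ x, 0 < g x)
    (hg : ∀ x, HasDerivAt g (g1 x) x)
    (hg1 : ∀ x, HasDerivAt g1 (g2 x) x) (y : ℝ) :
    hyvScore g y = 2 * g2 y / g y - (g1 y / g y) ^ 2 := by
  have hlog := derivLog_eq g g1 hpos hg
  have hdiv : HasDerivAt (fun x => g1 x / g x)
      ((g2 y * g y - g1 y * g1 y) / (g y) ^ 2) y := (hg1 y).div (hg y) (hpos y).ne'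
  have h2 : deriv (deriv (fun w => Real.log (g w))) y
      = (g2 y * g y - g1 y * g1 y) / (g y) ^ 2 := by
    rw [hlog]; exact hdiv.deriv
  rw [hyvScore, h2, hlog]
  have hgy := (hpos y).ne'
  field_simp
  ring

lemma aesm_deriv_mul {Θ : Type*} [MeasurableSpace Θ] {ν : Measure Θ} (u : ℝ → Θ → ℝ) (p : Θ → ℝ)
    (hdiff : ∀ θ x, HasDerivAt (fun z => u z θ) (deriv (fun z => u z θ) x) x)
    (hmeas : ∀ y, AEStronglyMeasurable (fun θ => u y θ * p θ) ν) (y : ℝ) :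
    AEStronglyMeasurable (fun θ => deriv (fun z => u z θ) y * p θ) ν := by
  apply aestronglyMeasurable_of_tendsto_ae (u := Filter.atTop)
    (f := fun (n : ℕ) θ => (u (y + 1 / (n + 1)) θ * p θ - u y θ * p θ) * (n + 1))
  · exact fun n => ((hmeas _).sub (hmeas y)).mul_const _
  · refine Filter.Eventually.of_forall fun θ => ?_
    have hder : HasDerivAt (fun z => u z θ * p θ) (deriv (fun z => u z θ) y * p θ) y :=
      (hdiff θ y).mul_const _
    rw [hasDerivAt_iff_tendsto_slope] at hder
    have hz : Filter.Tendsto (fun n : ℕ => y + 1 / ((n : ℝ) + 1)) Filter.atTop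
        (nhdsWithin y {y}ᶜ) := by
      rw [tendsto_nhdsWithin_iff]
      constructor
      · have := tendsto_one_div_add_atTop_nhds_zero_nat (𝕜 := ℝ)
        have h := this.const_add y
        simpa using h
      · refine Filter.Eventually.of_forall fun n => ?_
        have : (0 : ℝ) < 1 / ((n : ℝ) + 1) := by positivity
        simp only [Set.mem_compl_iff, Set.mem_singleton_iff]
        intro h
        nlinarith [h]
    have := hder.comp hz
    convert this using 2 with n
    rw [Function.comp_apply, slope_def_field]
    field_simp
    ring

/-- The Hyvärinen score of the Bayesian predictive density decomposes as the posterior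
expectation of the conditional Hyvärinen scores plus the posterior variance of the
conditional score functions. -/
theorem hyvScore_predictive_decomposition
    {Θ : Type*} [MeasurableSpace Θ] (ν : Measure Θ) [SigmaFinite ν]
    (prior : Θ → ℝ) (f : ℝ → Θ → ℝ)
    (hprior_nonneg : ∀ θ, 0 ≤ prior θ) (hprior_prob : ∫ θ, prior θ ∂ν = 1)
    (hf_pos : ∀ y θ, 0 < f y θ)
    (hf_smooth : ∀ θ, ContDiff ℝ 2 (fun y => f y θ))
    (hf_int : ∀ y, Integrable (fun θ => f y θ * prior θ) ν)
    (h1 h2 : Θ → ℝ) (h1_int : Integrable h1 ν) (h2_int : Integrable h2 ν)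
    (hdom1 : ∀ y θ, |prior θ * deriv (fun z => f z θ) y| ≤ h1 θ)
    (hdom2 : ∀ y θ, |prior θ * deriv (deriv (fun z => f z θ)) y| ≤ h2 θ)
    (y₀ : ℝ) :
    hyvScore (fun y => ∫ θ, f y θ * prior θ ∂ν) y₀ =
      (∫ θ, hyvScore (fun y => f y θ) y₀ *
          (f y₀ θ * prior θ / ∫ θ', f y₀ θ' * prior θ' ∂ν) ∂ν) +
        ((∫ θ, (deriv (fun y => Real.log (f y θ)) y₀) ^ 2 *
            (f y₀ θ * prior θ / ∫ θ', f y₀ θ' * prior θ' ∂ν) ∂ν) -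
          (∫ θ, deriv (fun y => Real.log (f y θ)) y₀ *
            (f y₀ θ * prior θ / ∫ θ', f y₀ θ' * prior θ' ∂ν) ∂ν) ^ 2) := by
  -- differentiability facts
  have hdiff1 : ∀ θ, Differentiable ℝ (fun y => f y θ) := fun θ =>
    (hf_smooth θ).differentiable (by norm_num)
  have hdiff2 : ∀ θ, Differentiable ℝ (deriv (fun y => f y θ)) := by
    intro θ
    have h := hf_smooth θ
    rw [(by norm_num : (2 : WithTop ℕ∞) = 1 + 1), contDiff_succ_iff_deriv] at h
    exact h.2.2.differentiable (by norm_num)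
  have hd1 : ∀ θ x, HasDerivAt (fun z => f z θ) (deriv (fun z => f z θ) x) x :=
    fun θ x => (hdiff1 θ x).hasDerivAt
  have hd2 : ∀ θ x, HasDerivAt (deriv (fun z => f z θ))
      (deriv (deriv (fun z => f z θ)) x) x := fun θ x => (hdiff2 θ x).hasDerivAt
  -- positivity of the marginal
  have hprior_int : Integrable prior ν := by
    by_contra hcon
    rw [integral_undef hcon] at hprior_prob
    norm_num at hprior_prob
  have Mpos : ∀ y, 0 < ∫ θ, f y θ * prior θ ∂ν := by
    intro y
    rw [integral_pos_iff_support_of_nonneg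
      (fun θ => mul_nonneg (hf_pos y θ).le (hprior_nonneg θ)) (hf_int y)]
    have hsupp : Function.support (fun θ => f y θ * prior θ) = Function.support prior := by
      ext θ
      simp [Function.mem_support, mul_eq_zero, (hf_pos y θ).ne']
    rw [hsupp]
    rw [← integral_pos_iff_support_of_nonneg hprior_nonneg hprior_int, hprior_prob]
    norm_num
  -- measurability of derivative integrands
  have hF1meas : ∀ y, AEStronglyMeasurable (fun θ => deriv (fun z => f z θ) y * prior θ) ν :=
    fun y => aesm_deriv_mul f prior hd1 (fun x => (hf_int x).aestronglyMeasurable) y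
  -- differentiation under the integral sign, first derivative
  have key1 : ∀ y : ℝ, Integrable (fun θ => deriv (fun z => f z θ) y * prior θ) ν ∧
      HasDerivAt (fun x => ∫ θ, f x θ * prior θ ∂ν)
        (∫ θ, deriv (fun z => f z θ) y * prior θ ∂ν) y := by
    intro y
    apply hasDerivAt_integral_of_dominated_loc_of_deriv_le
      (F' := fun x θ => deriv (fun z => f z θ) x * prior θ) (bound := h1) (Metric.ball_mem_nhds y one_pos)
    · exact .of_forall fun x => (hf_int x).aestronglyMeasurable
    · exact hf_int y
    · exact hF1meas y
    · exact .of_forall fun θ x _ => by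
        simpa [Real.norm_eq_abs, abs_mul, mul_comm] using hdom1 x θ
    · exact h1_int
    · exact .of_forall fun θ x _ => (hd1 θ x).mul_const _
  have hF2meas : ∀ y, AEStronglyMeasurable
      (fun θ => deriv (deriv (fun z => f z θ)) y * prior θ) ν :=
    aesm_deriv_mul (fun x θ => deriv (fun z => f z θ) x) prior hd2
      (fun x => (key1 x).1.aestronglyMeasurable)
  -- differentiation under the integral sign, second derivative
  have key2 : ∀ y : ℝ, Integrable (fun θ => deriv (deriv (fun z => f z θ)) y * prior θ) ν ∧
      HasDerivAt (fun x => ∫ θ, deriv (fun z => f z θ) x * prior θ ∂ν)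
        (∫ θ, deriv (deriv (fun z => f z θ)) y * prior θ ∂ν) y := by
    intro y
    apply hasDerivAt_integral_of_dominated_loc_of_deriv_le
      (F' := fun x θ => deriv (deriv (fun z => f z θ)) x * prior θ) (bound := h2) (Metric.ball_mem_nhds y one_pos)
    · exact .of_forall fun x => (key1 x).1.aestronglyMeasurable
    · exact (key1 y).1
    · exact hF2meas y
    · exact .of_forall fun θ x _ => by
        simpa [Real.norm_eq_abs, abs_mul, mul_comm] using hdom2 x θ
    · exact h2_int
    · exact .of_forall fun θ x _ => (hd2 θ x).mul_const _
  -- score formulas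
  have hyvM : hyvScore (fun y => ∫ θ, f y θ * prior θ ∂ν) y₀ =
      2 * (∫ θ, deriv (deriv (fun z => f z θ)) y₀ * prior θ ∂ν) / (∫ θ, f y₀ θ * prior θ ∂ν)
      - ((∫ θ, deriv (fun z => f z θ) y₀ * prior θ ∂ν) / (∫ θ, f y₀ θ * prior θ ∂ν)) ^ 2 :=
    hyv_formula _ (fun x => ∫ θ, deriv (fun z => f z θ) x * prior θ ∂ν)
      (fun x => ∫ θ, deriv (deriv (fun z => f z θ)) x * prior θ ∂ν)
      Mpos (fun x => (key1 x).2) (fun x => (key2 x).2) y₀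
  have hyvθ : ∀ θ, hyvScore (fun y => f y θ) y₀ =
      2 * deriv (deriv (fun z => f z θ)) y₀ / f y₀ θ
        - (deriv (fun z => f z θ) y₀ / f y₀ θ) ^ 2 :=
    fun θ => hyv_formula _ (deriv (fun z => f z θ)) (deriv (deriv (fun z => f z θ)))
      (fun x => hf_pos x θ) (hd1 θ) (hd2 θ) y₀
  have hlogθ : ∀ θ, deriv (fun y => Real.log (f y θ)) y₀
      = deriv (fun z => f z θ) y₀ / f y₀ θ := fun θ =>
    congrFun (derivLog_eq (fun x => f x θ) (deriv (fun z => f z θ))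
      (fun x => hf_pos x θ) (hd1 θ)) y₀
  -- key pointwise bound for the score-squared integrand
  have hqb : ∀ θ, |(deriv (fun z => f z θ) y₀ * prior θ) ^ 2 / (f y₀ θ * prior θ)| ≤ 2 * h2 θ := by
    intro θ
    have h2nn : 0 ≤ h2 θ := (abs_nonneg _).trans (hdom2 y₀ θ)
    rcases eq_or_ne (prior θ) 0 with hp | hp
    · simp [hp]
      positivity
    · have hppos : 0 < prior θ := (hprior_nonneg θ).lt_of_ne (Ne.symm hp)
      have hgpos := hf_pos y₀ θ
      have hden : 0 < f y₀ θ * prior θ := mul_pos hgpos hppos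
      have hsq : (deriv (fun z => f z θ) y₀) ^ 2 ≤ 2 * (h2 θ / prior θ) * f y₀ θ := by
        apply sq_deriv_le_two_mul (fun x => f x θ) (deriv (fun z => f z θ))
          (deriv (deriv (fun z => f z θ))) (h2 θ / prior θ)
          (fun x => hf_pos x θ) (hd1 θ) (hd2 θ)
        intro x
        rw [le_div_iff₀ hppos]
        have := hdom2 x θ
        rw [abs_mul, abs_of_pos hppos] at this
        linarith [this]
      rw [abs_of_nonneg (by positivity), div_le_iff₀ hden]
      calc (deriv (fun z => f z θ) y₀ * prior θ) ^ 2
          = (deriv (fun z => f z θ) y₀) ^ 2 * prior θ ^ 2 := by ring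
        _ ≤ (2 * (h2 θ / prior θ) * f y₀ θ) * prior θ ^ 2 :=
            mul_le_mul_of_nonneg_right hsq (sq_nonneg _)
        _ = 2 * h2 θ * (f y₀ θ * prior θ) := by field_simp
  -- integrability of the score-squared integrand
  have hq_meas : AEStronglyMeasurable
      (fun θ => (deriv (fun z => f z θ) y₀ * prior θ) ^ 2 / (f y₀ θ * prior θ)) ν := by
    have m1 := (key1 y₀).1.aemeasurable
    have m0 := (hf_int y₀).aemeasurable
    simp only [pow_two]
    exact ((m1.mul m1).div m0).aestronglyMeasurable
  have hq_int : Integrable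
      (fun θ => (deriv (fun z => f z θ) y₀ * prior θ) ^ 2 / (f y₀ θ * prior θ)) ν := by
    apply (h2_int.const_mul 2).mono hq_meas
    refine .of_forall fun θ => ?_
    rw [Real.norm_eq_abs, Real.norm_eq_abs]
    exact (hqb θ).trans (le_abs_self _)
  -- abbreviation for the normalizing constant
  have hA := Mpos y₀
  have hAne : (∫ θ, f y₀ θ * prior θ ∂ν) ≠ 0 := hA.ne'
  -- pointwise rewrites of the three integrands
  have E1 : ∀ θ, hyvScore (fun y => f y θ) y₀ *
      (f y₀ θ * prior θ / ∫ θ', f y₀ θ' * prior θ' ∂ν)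
      = 2 * (deriv (deriv (fun z => f z θ)) y₀ * prior θ) / (∫ θ, f y₀ θ * prior θ ∂ν)
        - (deriv (fun z => f z θ) y₀ * prior θ) ^ 2 / (f y₀ θ * prior θ)
          / (∫ θ, f y₀ θ * prior θ ∂ν) := by
    intro θ
    rw [hyvθ θ]
    rcases eq_or_ne (prior θ) 0 with hp | hp
    · simp [hp]
    · have hg := (hf_pos y₀ θ).ne'
      field_simp
  have E2 : ∀ θ, (deriv (fun y => Real.log (f y θ)) y₀) ^ 2 *
      (f y₀ θ * prior θ / ∫ θ', f y₀ θ' * prior θ' ∂ν)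
      = (deriv (fun z => f z θ) y₀ * prior θ) ^ 2 / (f y₀ θ * prior θ)
          / (∫ θ, f y₀ θ * prior θ ∂ν) := by
    intro θ
    rw [hlogθ θ]
    rcases eq_or_ne (prior θ) 0 with hp | hp
    · simp [hp]
    · have hg := (hf_pos y₀ θ).ne'
      field_simp
  have E3 : ∀ θ, deriv (fun y => Real.log (f y θ)) y₀ *
      (f y₀ θ * prior θ / ∫ θ', f y₀ θ' * prior θ' ∂ν)
      = (deriv (fun z => f z θ) y₀ * prior θ) / (∫ θ, f y₀ θ * prior θ ∂ν) := by
    intro θ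
    rw [hlogθ θ]
    rcases eq_or_ne (prior θ) 0 with hp | hp
    · simp [hp]
    · have hg := (hf_pos y₀ θ).ne'
      field_simp
  -- rewrite the three integrals
  have I1 : (∫ θ, hyvScore (fun y => f y θ) y₀ *
      (f y₀ θ * prior θ / ∫ θ', f y₀ θ' * prior θ' ∂ν) ∂ν)
      = 2 * (∫ θ, deriv (deriv (fun z => f z θ)) y₀ * prior θ ∂ν) / (∫ θ, f y₀ θ * prior θ ∂ν)
        - (∫ θ, (deriv (fun z => f z θ) y₀ * prior θ) ^ 2 / (f y₀ θ * prior θ) ∂ν)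
          / (∫ θ, f y₀ θ * prior θ ∂ν) := by
    rw [integral_congr_ae (Filter.Eventually.of_forall E1)]
    rw [integral_sub (((key2 y₀).1.const_mul 2).div_const _) (hq_int.div_const _)]
    rw [integral_div, integral_div, integral_const_mul]
  have I2 : (∫ θ, (deriv (fun y => Real.log (f y θ)) y₀) ^ 2 *
      (f y₀ θ * prior θ / ∫ θ', f y₀ θ' * prior θ' ∂ν) ∂ν)
      = (∫ θ, (deriv (fun z => f z θ) y₀ * prior θ) ^ 2 / (f y₀ θ * prior θ) ∂ν)
          / (∫ θ, f y₀ θ * prior θ ∂ν) := by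
    rw [integral_congr_ae (Filter.Eventually.of_forall E2)]
    rw [integral_div]
  have I3 : (∫ θ, deriv (fun y => Real.log (f y θ)) y₀ *
      (f y₀ θ * prior θ / ∫ θ', f y₀ θ' * prior θ' ∂ν) ∂ν)
      = (∫ θ, deriv (fun z => f z θ) y₀ * prior θ ∂ν) / (∫ θ, f y₀ θ * prior θ ∂ν) := by
    rw [integral_congr_ae (Filter.Eventually.of_forall E3)]
    rw [integral_div]
  rw [hyvM, I1, I2, I3]
  ring
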